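/- Let a, b ∈ ℂ with |a|² + |b|² = 1 and let U be the qubit unitary U = [[a, b], [−conj(b), conj(a)]]. Then the de-cohering power of U in the relative entropy of coherence equals 1 − H(1/2 + |a||b|): the value 1 − H(1/2 + |a||b|) is the greatest element of the set { 1 − H(|(U ψ_θ)₀|²) : θ ∈ ℝ }, where (U ψ_θ)₀ denotes the first component of U ψ_θ. -/

import Mathlib

open Matrix BigOperators ComplexOrder

/-- The l1-coherence of a matrix: the sum of the absolute values of its
off-diagonal entries. -/
noncomputable def Cl1 {n : ℕ} (A : Matrix (Fin n) (Fin n) ℂ) : ℝ :=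
  ∑ i, ∑ j, if i ≠ j then ‖A i j‖ else 0

/-- A density matrix: positive semidefinite with trace 1. -/
def IsDensity {n : ℕ} (ρ : Matrix (Fin n) (Fin n) ℂ) : Prop :=
  ρ.PosSemidef ∧ ρ.trace = 1

/-- A quantum operation (CPTP map) given by a finite family of Kraus operators. -/
def IsQuantumOp {n : ℕ} (Φ : Matrix (Fin n) (Fin n) ℂ → Matrix (Fin n) (Fin n) ℂ) : Prop :=
  ∃ (m : ℕ) (K : Fin m → Matrix (Fin n) (Fin n) ℂ),
    (∑ i, (K i)ᴴ * K i) = 1 ∧ ∀ ρ, Φ ρ = ∑ i, K i * ρ * (K i)ᴴ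

/-- The dephasing map `Δ`, keeping only the diagonal part of a matrix. -/
def Deph {n : ℕ} (A : Matrix (Fin n) (Fin n) ℂ) : Matrix (Fin n) (Fin n) ℂ :=
  Matrix.of fun i j => if i = j then A i j else 0

/-- The maximally coherent qubit state vector `(1/√2)(1, e^{iθ})`. -/
noncomputable def psi (θ : ℝ) : Fin 2 → ℂ :=
  ![1 / (Real.sqrt 2 : ℂ), Complex.exp (θ * Complex.I) / (Real.sqrt 2 : ℂ)]

/-- The outer product `w w†` of a vector with itself. -/
def outer {n : ℕ} (w : Fin n → ℂ) : Matrix (Fin n) (Fin n) ℂ :=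
  Matrix.vecMulVec w (star w)

/-- The qubit unitary `[[a, b], [-conj b, conj a]]`. -/
def Uab (a b : ℂ) : Matrix (Fin 2) (Fin 2) ℂ :=
  !![a, b; -(starRingEnd ℂ) b, (starRingEnd ℂ) a]

/-- The binary entropy (base 2), with the convention `0 · log 0 = 0`. -/
noncomputable def H (x : ℝ) : ℝ :=
  -(x * Real.logb 2 x) - (1 - x) * Real.logb 2 (1 - x)

lemma H_eq (x : ℝ) : H x = Real.binEntropy x / Real.log 2 := by
  unfold H Real.binEntropy Real.logb
  rw [Real.log_inv, Real.log_inv]; ring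

lemma H_symm (x : ℝ) : H (1 - x) = H x := by
  rw [H_eq, H_eq, Real.binEntropy_one_sub]

lemma H_anti {x y : ℝ} (hx : 1/2 ≤ x) (hxy : x ≤ y) (hy : y ≤ 1) : H y ≤ H x := by
  rw [H_eq, H_eq]
  have h := Real.binEntropy_strictAntiOn.antitoneOn
    (Set.mem_Icc.2 ⟨by linarith, by linarith⟩) (Set.mem_Icc.2 ⟨by linarith, hy⟩) hxy
  gcongr

lemma key_abs (a b : ℂ) (hab : ‖a‖ ^ 2 + ‖b‖ ^ 2 = 1) (θ : ℝ) :
    ‖(Uab a b).mulVec (psi θ) 0‖ ^ 2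
      = 1/2 + ((starRingEnd ℂ) a * b * Complex.exp (θ * Complex.I)).re := by
  have h0 : (Uab a b).mulVec (psi θ) 0
      = (a + b * Complex.exp (θ * Complex.I)) / (Real.sqrt 2 : ℂ) := by
    simp [Uab, psi, Matrix.mulVec, dotProduct, Fin.sum_univ_two]
    ring
  rw [h0, Complex.sq_norm, Complex.normSq_div, Complex.normSq_add]
  have he : Complex.normSq (Complex.exp (θ * Complex.I)) = 1 := by
    rw [← Complex.sq_norm, Complex.norm_exp_ofReal_mul_I]; norm_num
  have hre : (a * (starRingEnd ℂ) (b * Complex.exp (θ * Complex.I))).re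
      = ((starRingEnd ℂ) a * b * Complex.exp (θ * Complex.I)).re := by
    rw [← Complex.conj_re ((starRingEnd ℂ) a * b * Complex.exp (θ * Complex.I))]
    simp
    ring
  have hsq : Complex.normSq a + Complex.normSq b = 1 := by
    rw [← Complex.sq_norm, ← Complex.sq_norm]; exact hab
  have h2 : Complex.normSq ((Real.sqrt 2 : ℝ) : ℂ) = 2 := by
    rw [Complex.normSq_ofReal, Real.mul_self_sqrt (by norm_num)]
  rw [Complex.normSq_mul, he, hre, h2]
  rw [show Complex.normSq a + Complex.normSq b * 1 = 1 by linarith]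
  ring

theorem decohering_power_relent_qubit_unitary
    (a b : ℂ) (hab : ‖a‖ ^ 2 + ‖b‖ ^ 2 = 1) :
    IsGreatest
      {x : ℝ | ∃ θ : ℝ, x = 1 - H (‖(Uab a b).mulVec (psi θ) 0‖ ^ 2)}
      (1 - H (1 / 2 + ‖a‖ * ‖b‖)) := by
  set t := ‖a‖ * ‖b‖ with ht
  have ht0 : 0 ≤ t := mul_nonneg (norm_nonneg a) (norm_nonneg b)
  have ht2 : t ≤ 1/2 := by nlinarith [sq_nonneg (‖a‖ - ‖b‖)]
  constructor
  · refine ⟨-(Complex.arg ((starRingEnd ℂ) a * b)), ?_⟩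
    rw [key_abs a b hab]
    set z := (starRingEnd ℂ) a * b with hzdef
    have hz : z * Complex.exp (((-(Complex.arg z) : ℝ) : ℂ) * Complex.I)
        = (‖z‖ : ℂ) := by
      have h1 : (((-(Complex.arg z) : ℝ)) : ℂ) * Complex.I
          = -((Complex.arg z : ℂ) * Complex.I) := by push_cast; ring
      rw [h1]
      calc z * Complex.exp (-((Complex.arg z : ℂ) * Complex.I))
          = ((‖z‖ : ℂ) * Complex.exp ((Complex.arg z : ℂ) * Complex.I))
            * Complex.exp (-((Complex.arg z : ℂ) * Complex.I)) := by
            rw [Complex.norm_mul_exp_arg_mul_I z]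
        _ = (‖z‖ : ℂ)
            * Complex.exp ((Complex.arg z : ℂ) * Complex.I + -((Complex.arg z : ℂ) * Complex.I)) := by
            rw [Complex.exp_add]; ring
        _ = (‖z‖ : ℂ) := by simp
    rw [hz, Complex.ofReal_re, hzdef, norm_mul, Complex.norm_conj]
  · rintro x ⟨θ, rfl⟩
    rw [key_abs a b hab]
    set r := ((starRingEnd ℂ) a * b * Complex.exp (θ * Complex.I)).re with hrdef
    have hr : |r| ≤ t := by
      calc |r| ≤ ‖(starRingEnd ℂ) a * b * Complex.exp (θ * Complex.I)‖ :=
        Complex.abs_re_le_norm _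
      _ = t := by
        rw [norm_mul, norm_mul, Complex.norm_conj, Complex.norm_exp_ofReal_mul_I, mul_one]
    have habs : -t ≤ r ∧ r ≤ t := abs_le.mp hr
    have hmain : H (1/2 + t) ≤ H (1/2 + r) := by
      rcases le_or_gt 0 r with h0 | h0
      · exact H_anti (by linarith) (by linarith) (by linarith)
      · have heq : H (1/2 - r) = H (1/2 + r) := by
          rw [show (1:ℝ)/2 - r = 1 - (1/2 + r) by ring, H_symm]
        rw [← heq]
        exact H_anti (by linarith) (by linarith) (by linarith)
    linarith
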